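/- For every positive integer $k$, $\sum_{i=1}^{\infty} \frac{h_{k+i}}{i(k+i)} = -2\ln(2)\frac{h_k}{k} + \frac{h_k^{(2)}}{k} + \frac{h_k^2}{k} + \frac{1}{k}\sum_{i=1}^{k} \frac{h_i}{i}$. -/

import Mathlib

open scoped BigOperators
open Filter Topology Finset

noncomputable def H (k : ℕ) : ℝ := ∑ i ∈ Finset.Icc 1 k, (1 : ℝ) / i
noncomputable def Hp (n k : ℕ) : ℝ := ∑ i ∈ Finset.Icc 1 k, (1 : ℝ) / (i : ℝ) ^ n
noncomputable def oh (n k : ℕ) : ℝ := ∑ i ∈ Finset.Icc 1 k, (1 : ℝ) / (2 * (i : ℝ) - 1) ^ n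
noncomputable def Li (n : ℕ) (x : ℝ) : ℝ := ∑' m : ℕ, x ^ (m + 1) / ((m : ℝ) + 1) ^ n

lemma oh_succ (n k : ℕ) : oh n (k + 1) = oh n k + 1 / (2 * ((k:ℝ) + 1) - 1) ^ n := by
  unfold oh
  rw [Finset.sum_Icc_succ_top (Nat.le_add_left 1 k)]
  push_cast; ring_nf

lemma H_succ (k : ℕ) : H (k + 1) = H k + 1 / ((k:ℝ) + 1) := by
  unfold H
  rw [Finset.sum_Icc_succ_top (Nat.le_add_left 1 k)]
  push_cast; ring_nf

lemma oh_nonneg (k : ℕ) : 0 ≤ oh 1 k := by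
  unfold oh
  apply Finset.sum_nonneg
  intro i hi
  simp only [Finset.mem_Icc] at hi
  have : (1:ℝ) ≤ i := by exact_mod_cast hi.1
  have h2 : (0:ℝ) < 2 * (i:ℝ) - 1 := by linarith
  positivity

lemma H_eq_harmonic (n : ℕ) : H n = (harmonic n : ℝ) := by
  induction n with
  | zero => simp [H, harmonic]
  | succ n ih => rw [H_succ, ih, harmonic_succ]; push_cast; ring

lemma oh_eq (n : ℕ) : oh 1 n = H (2 * n) - (1/2) * H n := by
  induction n with
  | zero => simp [oh, H]
  | succ n ih =>
    have h2 : 2 * (n+1) = (2*n + 1) + 1 := by ring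
    rw [oh_succ, ih, h2, H_succ, H_succ, H_succ]
    have hn : (0:ℝ) ≤ n := n.cast_nonneg
    have h1 : (2:ℝ) * ((n:ℝ)+1) - 1 ≠ 0 := by nlinarith
    have h3 : ((n:ℝ)+1) ≠ 0 := by positivity
    push_cast
    field_simp
    ring

-- shift lemma
lemma oh_shift (a t : ℕ) : oh 1 (a + t) - oh 1 a = ∑ s ∈ Finset.Icc 1 t, (1:ℝ) / (2 * ((a:ℝ) + s) - 1) := by
  induction t with
  | zero => simp
  | succ t ih =>
    rw [Finset.sum_Icc_succ_top (Nat.le_add_left 1 t), ← add_assoc, oh_succ, ← ih]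
    push_cast; ring

lemma tendsto_two_mul : Tendsto (fun N : ℕ => 2 * N) atTop atTop :=
  tendsto_atTop_atTop.mpr fun b => ⟨b, fun a ha => by omega⟩

lemma lim_log2 : Tendsto (fun N : ℕ => H (2*N) - H N) atTop (𝓝 (Real.log 2)) := by
  have h1 := Real.tendsto_harmonic_sub_log.comp tendsto_two_mul
  have h2 := Real.tendsto_harmonic_sub_log
  have h3 := (h1.sub h2).add_const (Real.log 2)
  rw [sub_self, zero_add] at h3
  apply h3.congr'
  filter_upwards [eventually_ge_atTop 1] with N hN
  have hN0 : (N:ℝ) ≠ 0 := by positivity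
  simp only [Function.comp_apply]
  have hlog : Real.log ((2*N:ℕ):ℝ) = Real.log 2 + Real.log N := by
    push_cast
    rw [Real.log_mul two_ne_zero hN0]
  rw [H_eq_harmonic, H_eq_harmonic, hlog]
  ring

lemma limA : Tendsto (fun N : ℕ => H N - 2 * oh 1 N) atTop (𝓝 (-2 * Real.log 2)) := by
  have := lim_log2.const_mul (-2 : ℝ)
  apply this.congr
  intro N
  rw [oh_eq]
  ring

lemma lim_oh_shift (t : ℕ) : Tendsto (fun N : ℕ => oh 1 (N + t) - oh 1 N) atTop (𝓝 0) := by
  induction t with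
  | zero => simpa using tendsto_const_nhds
  | succ t ih =>
    have h1 : Tendsto (fun N : ℕ => (2 * (((N + t : ℕ):ℝ) + 1) - 1)) atTop atTop := by
      apply tendsto_atTop_mono (f := fun N : ℕ => (N : ℝ))
      · intro N; push_cast; linarith [Nat.cast_nonneg (α := ℝ) t]
      · exact tendsto_natCast_atTop_atTop
    have h2 := h1.inv_tendsto_atTop
    have h3 := h2.add ih
    rw [zero_add] at h3
    apply h3.congr
    intro N
    have : N + (t + 1) = (N + t) + 1 := by omega
    rw [this, oh_succ]
    simp [one_div]
    ring

lemma idC1 (t N : ℕ) (ht : 1 ≤ t) :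
    ∑ i ∈ Finset.Icc 1 N, (1:ℝ) / ((i:ℝ) * (2*i + 2*t - 1)) =
      (H N - 2 * (oh 1 (t + N) - oh 1 t)) / (2*(t:ℝ) - 1) := by
  have ht' : (1:ℝ) ≤ t := by exact_mod_cast ht
  rw [oh_shift t N]
  unfold H
  rw [Finset.mul_sum, ← Finset.sum_sub_distrib, Finset.sum_div]
  apply Finset.sum_congr rfl
  intro i hi
  simp only [Finset.mem_Icc] at hi
  have hi' : (1:ℝ) ≤ i := by exact_mod_cast hi.1
  have h1 : (i:ℝ) ≠ 0 := by linarith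
  have h2 : (2:ℝ)*(t:ℝ) - 1 ≠ 0 := by nlinarith
  have h3 : (2:ℝ)*((t:ℝ) + i) - 1 ≠ 0 := by nlinarith
  have h4 : (2:ℝ)*(i:ℝ) + 2*t - 1 ≠ 0 := by nlinarith
  have h5 : (2:ℝ)*((i:ℝ) + t) - 1 ≠ 0 := by nlinarith
  field_simp
  ring

lemma limC1 (t : ℕ) (ht : 1 ≤ t) :
    Tendsto (fun N : ℕ => ∑ i ∈ Finset.Icc 1 N, (1:ℝ) / ((i:ℝ) * (2*i + 2*t - 1))) atTop
      (𝓝 ((2 * oh 1 t - 2 * Real.log 2) / (2*(t:ℝ) - 1))) := by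
  have h1 : Tendsto (fun N : ℕ => H N - 2 * (oh 1 (t + N) - oh 1 t)) atTop
      (𝓝 (2 * oh 1 t - 2 * Real.log 2)) := by
    have h2 := (lim_oh_shift t).const_mul (2:ℝ)
    rw [mul_zero] at h2
    have h3 := (limA.sub h2).add_const (2 * oh 1 t)
    have : -2 * Real.log 2 - 0 + 2 * oh 1 t = 2 * oh 1 t - 2 * Real.log 2 := by ring
    rw [this] at h3
    apply h3.congr
    intro N
    rw [add_comm t N]
    ring
  have := h1.div_const (2*(t:ℝ) - 1)
  apply this.congr
  intro N
  rw [idC1 t N ht]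

lemma oh_le_H (n : ℕ) : oh 1 n ≤ H n := by
  unfold oh H
  apply Finset.sum_le_sum
  intro i hi
  simp only [Finset.mem_Icc] at hi
  have hi' : (1:ℝ) ≤ i := by exact_mod_cast hi.1
  rw [pow_one]
  apply div_le_div_of_nonneg_left one_pos.le (by linarith) (by linarith)

lemma lim_aux : Tendsto (fun N : ℕ => (1 + Real.log 2 + Real.log N) / (N:ℝ)) atTop (𝓝 0) := by
  have h1 : Tendsto (fun x : ℝ => Real.log x / x) atTop (𝓝 0) := by
    simpa using Real.isLittleO_log_id_atTop.tendsto_div_nhds_zero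
  have h2 : Tendsto (fun x : ℝ => (1 + Real.log 2) / x) atTop (𝓝 0) :=
    tendsto_const_nhds.div_atTop tendsto_id
  have h3 := h2.add h1
  rw [add_zero] at h3
  have h4 : Tendsto (fun x : ℝ => (1 + Real.log 2 + Real.log x) / x) atTop (𝓝 0) := by
    apply h3.congr'
    filter_upwards [eventually_gt_atTop (0:ℝ)] with x hx
    field_simp
  exact h4.comp tendsto_natCast_atTop_atTop

lemma limC2 (k : ℕ) (hk : 1 ≤ k) :
    Tendsto (fun N : ℕ => ∑ j ∈ Finset.Icc (N+1) (N+k), oh 1 j / (j:ℝ)) atTop (𝓝 0) := by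
  have hb := lim_aux.const_mul (k:ℝ)
  rw [mul_zero] at hb
  apply tendsto_of_tendsto_of_tendsto_of_le_of_le' tendsto_const_nhds hb
  · filter_upwards with N
    apply Finset.sum_nonneg
    intro j hj
    simp only [Finset.mem_Icc] at hj
    have : (0:ℝ) < j := by
      have : 1 ≤ j := by omega
      exact_mod_cast Nat.pos_of_ne_zero (by omega)
    exact div_nonneg (oh_nonneg j) this.le
  · filter_upwards [eventually_ge_atTop k] with N hN
    have hN1 : 1 ≤ N := le_trans hk hN
    have hNpos : (0:ℝ) < N := by exact_mod_cast Nat.pos_of_ne_zero (by omega)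
    have key : ∀ j ∈ Finset.Icc (N+1) (N+k), oh 1 j / (j:ℝ) ≤ (1 + Real.log 2 + Real.log N) / (N:ℝ) := by
      intro j hj
      simp only [Finset.mem_Icc] at hj
      have hj1 : 1 ≤ j := by omega
      have hjN : (N:ℝ) ≤ j := by exact_mod_cast Nat.le_of_lt (by omega)
      have hjR : (0:ℝ) < j := lt_of_lt_of_le hNpos hjN
      have hnum : oh 1 j ≤ 1 + Real.log 2 + Real.log N := by
        calc oh 1 j ≤ H j := oh_le_H j
          _ = (harmonic j : ℝ) := H_eq_harmonic j
          _ ≤ 1 + Real.log j := harmonic_le_one_add_log j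
          _ ≤ 1 + Real.log 2 + Real.log N := by
            have hj2N : (j:ℝ) ≤ 2 * N := by
              have : j ≤ 2 * N := by omega
              exact_mod_cast this
            have := Real.log_le_log (by exact_mod_cast Nat.pos_of_ne_zero (by omega) : (0:ℝ) < j) hj2N
            rw [Real.log_mul two_ne_zero (ne_of_gt hNpos)] at this
            linarith
      have hnum0 : (0:ℝ) ≤ 1 + Real.log 2 + Real.log N := by
        have := Real.log_nonneg (by exact_mod_cast hN1 : (1:ℝ) ≤ N)
        have := Real.log_nonneg (by norm_num : (1:ℝ) ≤ 2)
        linarith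
      exact div_le_div₀ hnum0 hnum hNpos hjN
    calc ∑ j ∈ Finset.Icc (N+1) (N+k), oh 1 j / (j:ℝ)
        ≤ ∑ _j ∈ Finset.Icc (N+1) (N+k), (1 + Real.log 2 + Real.log N) / (N:ℝ) :=
          Finset.sum_le_sum key
      _ = (k:ℝ) * ((1 + Real.log 2 + Real.log N) / (N:ℝ)) := by
          rw [Finset.sum_const, Nat.card_Icc]
          have : N + k + 1 - (N + 1) = k := by omega
          rw [this, nsmul_eq_mul]

lemma sq_id (k : ℕ) : (oh 1 k)^2 + oh 2 k = 2 * ∑ t ∈ Finset.Icc 1 k, oh 1 t / (2*(t:ℝ) - 1) := by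
  induction k with
  | zero => simp [oh]
  | succ k ih =>
    rw [Finset.sum_Icc_succ_top (Nat.le_add_left 1 k), oh_succ, oh_succ,
      mul_add (2:ℝ) (∑ t ∈ Finset.Icc 1 k, oh 1 t / (2*(t:ℝ) - 1)), ← ih]
    have hk : (0:ℝ) ≤ k := Nat.cast_nonneg k
    have h1 : (2:ℝ) * ((k:ℝ)+1) - 1 ≠ 0 := by nlinarith
    push_cast
    field_simp
    ring

lemma partial_id (k : ℕ) (hk : 1 ≤ k) (N : ℕ) :
    (k:ℝ) * ∑ i ∈ Finset.range N, oh 1 (k + (i+1)) / (((i:ℝ) + 1) * ((k:ℝ) + ((i:ℝ) + 1))) =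
      (∑ t ∈ Finset.Icc 1 k, ∑ i ∈ Finset.Icc 1 N, (1:ℝ) / ((i:ℝ) * (2*i + 2*t - 1)))
      + (∑ j ∈ Finset.Icc 1 k, oh 1 j / (j:ℝ))
      - (∑ j ∈ Finset.Icc (N+1) (N+k), oh 1 j / (j:ℝ)) := by
  induction N with
  | zero => simp
  | succ N ih =>
    rw [Finset.sum_range_succ, mul_add, ih]
    have hN1 : ((N:ℝ)+1) ≠ 0 := by positivity
    have hg : ∑ t ∈ Finset.Icc 1 k, ∑ i ∈ Finset.Icc 1 (N+1), (1:ℝ) / ((i:ℝ) * (2*i + 2*t - 1))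
        = (∑ t ∈ Finset.Icc 1 k, ∑ i ∈ Finset.Icc 1 N, (1:ℝ) / ((i:ℝ) * (2*i + 2*t - 1)))
          + ∑ t ∈ Finset.Icc 1 k, (1:ℝ) / ((((N:ℝ))+1) * (2*((N:ℝ)+1) + 2*t - 1)) := by
      rw [← Finset.sum_add_distrib]
      apply Finset.sum_congr rfl
      intro t _
      rw [Finset.sum_Icc_succ_top (Nat.le_add_left 1 N)]
      push_cast
      ring
    have hr : ∑ j ∈ Finset.Icc (N+1+1) (N+1+k), oh 1 j / (j:ℝ)
        = (∑ j ∈ Finset.Icc (N+1) (N+k), oh 1 j / (j:ℝ))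
          + oh 1 (N+k+1) / ((N:ℝ)+(k:ℝ)+1) - oh 1 (N+1) / ((N:ℝ)+1) := by
      rw [Finset.Icc_add_one_left_eq_Ioc, Finset.Icc_add_one_left_eq_Ioc]
      have hkk : N+1+k = N+k+1 := by omega
      rw [hkk]
      have hA : ∑ j ∈ Finset.Ioc N (N+1), oh 1 j / (j:ℝ)
          + ∑ j ∈ Finset.Ioc (N+1) (N+k+1), oh 1 j / (j:ℝ)
          = ∑ j ∈ Finset.Ioc N (N+k+1), oh 1 j / (j:ℝ) :=
        Finset.sum_Ioc_consecutive _ (by omega) (by omega)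
      have hB : ∑ j ∈ Finset.Ioc N (N+k), oh 1 j / (j:ℝ)
          + ∑ j ∈ Finset.Ioc (N+k) (N+k+1), oh 1 j / (j:ℝ)
          = ∑ j ∈ Finset.Ioc N (N+k+1), oh 1 j / (j:ℝ) :=
        Finset.sum_Ioc_consecutive _ (by omega) (by omega)
      have hs1 : ∑ j ∈ Finset.Ioc N (N+1), oh 1 j / (j:ℝ) = oh 1 (N+1) / ((N:ℝ)+1) := by
        rw [Nat.Ioc_succ_singleton, Finset.sum_singleton]
        push_cast; ring_nf
      have hs2 : ∑ j ∈ Finset.Ioc (N+k) (N+k+1), oh 1 j / (j:ℝ) = oh 1 (N+k+1) / ((N:ℝ)+(k:ℝ)+1) := by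
        rw [Nat.Ioc_succ_singleton, Finset.sum_singleton]
        push_cast; ring_nf
      rw [hs1] at hA
      rw [hs2] at hB
      linarith
    have key : (k:ℝ) * (oh 1 (k + (N+1)) / (((N:ℝ) + 1) * ((k:ℝ) + ((N:ℝ) + 1))))
        = (∑ t ∈ Finset.Icc 1 k, (1:ℝ) / ((((N:ℝ))+1) * (2*((N:ℝ)+1) + 2*t - 1)))
          - oh 1 (N+k+1) / ((N:ℝ)+(k:ℝ)+1) + oh 1 (N+1) / ((N:ℝ)+1) := by
      have hshift := oh_shift (N+1) k
      have hsum : ∑ t ∈ Finset.Icc 1 k, (1:ℝ) / ((((N:ℝ))+1) * (2*((N:ℝ)+1) + 2*t - 1))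
          = (1/((N:ℝ)+1)) * (oh 1 (N+1+k) - oh 1 (N+1)) := by
        rw [hshift, Finset.mul_sum]
        apply Finset.sum_congr rfl
        intro t ht
        simp only [Finset.mem_Icc] at ht
        have ht' : (1:ℝ) ≤ t := by exact_mod_cast ht.1
        have hNr : (0:ℝ) ≤ N := Nat.cast_nonneg N
        have hBB : (2:ℝ)*(((N+1:ℕ):ℝ)+t) - 1 = 2*((N:ℝ)+1) + 2*(t:ℝ) - 1 := by
          push_cast; ring
        rw [hBB]
        exact (one_div_mul_one_div _ _).symm
      have hke : k + (N+1) = N+1+k := by omega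
      have hke2 : N+1+k = N+k+1 := by omega
      rw [hke, hke2, hke2] at *
      rw [hsum]
      have hkr : (0:ℝ) ≤ k := Nat.cast_nonneg k
      have h2 : ((N:ℝ)+(k:ℝ)+1) ≠ 0 := by positivity
      have h3 : ((k:ℝ) + ((N:ℝ)+1)) ≠ 0 := by positivity
      field_simp
      ring
    rw [hg, hr, key]
    ring

theorem stmt16 (k : ℕ) (hk : 0 < k) : (∑' i : ℕ, oh 1 (k + (i+1)) / (((i : ℝ) + 1) * ((k : ℝ) + ((i : ℝ) + 1)))) = -2 * Real.log 2 * oh 1 k / (k : ℝ) + oh 2 k / (k : ℝ) + (oh 1 k)^2 / (k : ℝ) + (1 / (k : ℝ)) * ∑ i ∈ Finset.Icc 1 k, oh 1 i / (i : ℝ) := by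
  have hk1 : 1 ≤ k := hk
  have hkR : (0:ℝ) < k := by exact_mod_cast hk
  set C := ∑ i ∈ Finset.Icc 1 k, oh 1 i / (i : ℝ) with hC
  set G := ∑ t ∈ Finset.Icc 1 k, (2 * oh 1 t - 2 * Real.log 2) / (2*(t:ℝ) - 1) with hG
  -- limit of partial sums
  have hGlim : Tendsto (fun N : ℕ => ∑ t ∈ Finset.Icc 1 k,
      ∑ i ∈ Finset.Icc 1 N, (1:ℝ) / ((i:ℝ) * (2*i + 2*t - 1))) atTop (𝓝 G) := by
    apply tendsto_finset_sum
    intro t ht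
    exact limC1 t (Finset.mem_Icc.mp ht).1
  have hrlim := limC2 k hk1
  have hS : Tendsto (fun N : ℕ => ∑ i ∈ Finset.range N,
      oh 1 (k + (i+1)) / (((i:ℝ) + 1) * ((k:ℝ) + ((i:ℝ) + 1)))) atTop (𝓝 ((G + C) / k)) := by
    have h1 := ((hGlim.add (tendsto_const_nhds (x := C))).sub hrlim).div_const (k:ℝ)
    rw [sub_zero] at h1
    apply h1.congr
    intro N
    rw [← partial_id k hk1 N]
    field_simp
  have hnonneg : ∀ i : ℕ, 0 ≤ oh 1 (k + (i+1)) / (((i:ℝ) + 1) * ((k:ℝ) + ((i:ℝ) + 1))) := by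
    intro i
    have h1 : (0:ℝ) < ((i:ℝ) + 1) * ((k:ℝ) + ((i:ℝ) + 1)) := by positivity
    exact div_nonneg (oh_nonneg _) h1.le
  have hsum : HasSum (fun i : ℕ => oh 1 (k + (i+1)) / (((i:ℝ) + 1) * ((k:ℝ) + ((i:ℝ) + 1)))) ((G + C)/k) :=
    (hasSum_iff_tendsto_nat_of_nonneg hnonneg _).mpr hS
  rw [hsum.tsum_eq]
  -- now algebra
  have hGval : G = ((oh 1 k)^2 + oh 2 k) - 2 * Real.log 2 * oh 1 k := by
    have hsplit : G = 2 * (∑ t ∈ Finset.Icc 1 k, oh 1 t / (2*(t:ℝ) - 1))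
        - 2 * Real.log 2 * (∑ t ∈ Finset.Icc 1 k, (1:ℝ) / (2*(t:ℝ) - 1)) := by
      rw [hG, Finset.mul_sum, Finset.mul_sum, ← Finset.sum_sub_distrib]
      apply Finset.sum_congr rfl
      intro t ht
      have ht1 : (1:ℝ) ≤ t := by exact_mod_cast (Finset.mem_Icc.mp ht).1
      have hd : (2:ℝ)*(t:ℝ) - 1 ≠ 0 := by nlinarith
      field_simp
    have hoh : ∑ t ∈ Finset.Icc 1 k, (1:ℝ) / (2*(t:ℝ) - 1) = oh 1 k := by
      unfold oh
      apply Finset.sum_congr rfl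
      intro t _
      rw [pow_one]
    rw [hsplit, hoh, ← sq_id]
  rw [hGval]
  field_simp
  ring
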